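/- Let a > 0, h > 0, u_0 ∈ ℝ, and let (Ŷ_k)_{k≥0} be the jump chain of the second-order stochastic Euler dynamics for the ODE u' = −au, i.e. Ŷ_0 = u_0 and Ŷ_k = (1 − a H_k + a² H_k²/2) Ŷ_{k−1} with independent H_k ∼ Exp(mean h). Then for every k ∈ ℕ₀: 𝔼[Ŷ_k²] = α^k · u_0², where α := 1 − 2ah + 4a²h² − 6a³h³ + 6a⁴h⁴. Moreover, |α| < 1 if and only if ah < (1/3)·(1 − (2/(5 + √29))^{1/3} + ((5 + √29)/2)^{1/3}); hence, for u_0 ≠ 0, 𝔼[Ŷ_k²] → 0 as k → ∞ exactly under this stepsize restriction (approximately ah < 0.7181). -/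

import Mathlib

open MeasureTheory ProbabilityTheory Real Set Filter
open scoped NNReal ENNReal


lemma expInt (r : ℝ) (hr : 0 < r) (n : ℕ) :
    IntegrableOn (fun x : ℝ => x ^ n * exp (-(r * x))) (Ioi 0) := by
  have hs : (-1 : ℝ) < n := lt_of_lt_of_le (by norm_num) (Nat.cast_nonneg n)
  have h := integrableOn_rpow_mul_exp_neg_mul_rpow (s := (n : ℝ)) (p := 1) (b := r) hs one_pos hr
  refine h.congr_fun (fun x hx => ?_) measurableSet_Ioi
  simp only [Real.rpow_natCast, Real.rpow_one, neg_mul]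

lemma exp_moment_integrable {r : ℝ} (hr : 0 < r) (n : ℕ) :
    Integrable (fun x : ℝ => x ^ n) (expMeasure r) := by
  rw [expMeasure, gammaMeasure,
    show gammaPDF 1 r = fun x => ENNReal.ofReal (gammaPDFReal 1 r x) from rfl,
    integrable_withDensity_iff ((measurable_gammaPDFReal 1 r).ennreal_ofReal)
      (Filter.Eventually.of_forall fun x => ENNReal.ofReal_lt_top)]
  simp_rw [ENNReal.toReal_ofReal (gammaPDFReal_nonneg zero_lt_one hr _)]
  have hsupp : Function.support (fun x : ℝ => x ^ n * gammaPDFReal 1 r x) ⊆ Ici 0 := by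
    intro x hx
    by_contra hx0
    simp only [mem_Ici, not_le] at hx0
    apply hx
    simp [gammaPDFReal, not_le.mpr hx0]
  rw [show (fun x : ℝ => x ^ n * gammaPDFReal 1 r x)
      = (Ici 0).indicator (fun x : ℝ => x ^ n * gammaPDFReal 1 r x) from
    (Set.indicator_eq_self.2 hsupp).symm,
    integrable_indicator_iff measurableSet_Ici]
  rw [IntegrableOn, ← Measure.restrict_congr_set Ioi_ae_eq_Ici]
  have h2 : IntegrableOn (fun x : ℝ => r * (x ^ n * exp (-(r * x)))) (Ioi 0) :=
    (expInt r hr n).const_mul r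
  refine h2.congr_fun (fun x hx => ?_) measurableSet_Ioi
  have hx0 : (0:ℝ) < x := hx
  simp [gammaPDFReal, hx0.le, Real.Gamma_one]
  ring

lemma integral_expMeasure_eq {r : ℝ} (hr : 0 < r) (g : ℝ → ℝ) :
    ∫ x, g x ∂(expMeasure r) = ∫ x in Ioi 0, g x * (r * exp (-(r * x))) := by
  rw [expMeasure, gammaMeasure,
    show gammaPDF 1 r = fun x => ((Real.toNNReal (gammaPDFReal 1 r x) : ℝ≥0) : ℝ≥0∞) from rfl,
    integral_withDensity_eq_integral_smul ((measurable_gammaPDFReal 1 r).real_toNNReal) g]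
  simp_rw [NNReal.smul_def, Real.coe_toNNReal _ (gammaPDFReal_nonneg zero_lt_one hr _),
    smul_eq_mul]
  have hsupp : Function.support (fun x : ℝ => gammaPDFReal 1 r x * g x) ⊆ Ici 0 := by
    intro x hx
    by_contra hx0
    simp only [mem_Ici, not_le] at hx0
    apply hx
    simp [gammaPDFReal, not_le.mpr hx0]
  rw [show (fun x : ℝ => gammaPDFReal 1 r x * g x)
      = (Ici 0).indicator (fun x : ℝ => gammaPDFReal 1 r x * g x) from
    (Set.indicator_eq_self.2 hsupp).symm,
    integral_indicator measurableSet_Ici,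
    ← Measure.restrict_congr_set Ioi_ae_eq_Ici]
  refine setIntegral_congr_fun measurableSet_Ioi (fun x hx => ?_)
  have hx0 : (0:ℝ) < x := hx
  simp [gammaPDFReal, hx0.le, Real.Gamma_one]
  ring

lemma exp_moment {r : ℝ} (hr : 0 < r) (n : ℕ) :
    ∫ x, x ^ n ∂(expMeasure r) = n.factorial / r ^ n := by
  rw [integral_expMeasure_eq hr]
  have key : ∫ x in Ioi (0:ℝ), x ^ ((n + 1 : ℝ) - 1) * exp (-(r * x))
      = (1 / r) ^ ((n:ℝ) + 1) * Real.Gamma (n + 1) :=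
    integral_rpow_mul_exp_neg_mul_Ioi (by positivity) hr
  have h1 : ∫ x in Ioi (0:ℝ), x ^ n * (r * exp (-(r * x)))
      = r * ∫ x in Ioi (0:ℝ), x ^ ((n + 1 : ℝ) - 1) * exp (-(r * x)) := by
    rw [← integral_const_mul]
    refine setIntegral_congr_fun measurableSet_Ioi (fun x hx => ?_)
    have hx0 : (0:ℝ) < x := hx
    rw [show ((n:ℝ) + 1) - 1 = (n:ℝ) by ring, Real.rpow_natCast]
    ring
  rw [h1, key, Real.Gamma_nat_eq_factorial,
    show ((n:ℝ) + 1) = ((n + 1 : ℕ) : ℝ) by push_cast; ring, Real.rpow_natCast]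
  field_simp
  rw [one_div, inv_pow, pow_succ]
  field_simp

lemma exp_poly_integral {r : ℝ} (hr : 0 < r) (c : ℕ → ℝ) :
    ∫ x, (∑ i ∈ Finset.range 5, c i * x ^ i) ∂(expMeasure r)
      = ∑ i ∈ Finset.range 5, c i * (i.factorial / r ^ i) := by
  rw [integral_finset_sum _ (fun i _ => (exp_moment_integrable hr i).const_mul (c i))]
  exact Finset.sum_congr rfl fun i _ => by rw [MeasureTheory.integral_const_mul, exp_moment hr]

lemma exp_poly_integrable {r : ℝ} (hr : 0 < r) (c : ℕ → ℝ) :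
    Integrable (fun x : ℝ => ∑ i ∈ Finset.range 5, c i * x ^ i) (expMeasure r) :=
  integrable_finset_sum _ (fun i _ => (exp_moment_integrable hr i).const_mul (c i))

lemma quartic_abs_lt_one_iff {x : ℝ} (hx : 0 < x) :
    |1 - 2*x + 4*x^2 - 6*x^3 + 6*x^4| < 1 ↔
      x < (1/3) * (1 - (2/(5 + Real.sqrt 29)) ^ ((1:ℝ)/3)
        + ((5 + Real.sqrt 29)/2) ^ ((1:ℝ)/3)) := by
  set t : ℝ := ((5 + Real.sqrt 29)/2) ^ ((1:ℝ)/3) with htdef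
  have hs29 : (Real.sqrt 29) ^ 2 = 29 := Real.sq_sqrt (by norm_num)
  have hs29pos : 0 < Real.sqrt 29 := Real.sqrt_pos.mpr (by norm_num)
  have hbpos : (0:ℝ) < (5 + Real.sqrt 29)/2 := by positivity
  have htpos : 0 < t := Real.rpow_pos_of_pos hbpos _
  have ht3 : t ^ 3 = (5 + Real.sqrt 29)/2 := by
    rw [htdef, ← Real.rpow_natCast (((5 + Real.sqrt 29)/2) ^ ((1:ℝ)/3)) 3,
      ← Real.rpow_mul hbpos.le]
    norm_num
  have hsinv : (2/(5 + Real.sqrt 29)) ^ ((1:ℝ)/3) = t⁻¹ := by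
    rw [show (2:ℝ)/(5 + Real.sqrt 29) = ((5 + Real.sqrt 29)/2)⁻¹ by
        rw [inv_div],
      Real.inv_rpow hbpos.le, htdef]
  rw [hsinv]
  have hinv3 : (t⁻¹) ^ 3 = (Real.sqrt 29 - 5)/2 := by
    rw [inv_pow, ht3]
    rw [inv_div]
    rw [div_eq_div_iff (by positivity) (by norm_num)]
    nlinarith [hs29]
  have h1 : t * t⁻¹ = 1 := mul_inv_cancel₀ (ne_of_gt htpos)
  have hy3 : (t - t⁻¹)^3 = 5 - 3*(t - t⁻¹) := by
    have e : (t - t⁻¹)^3 = t^3 - (t⁻¹)^3 - 3*(t*t⁻¹)*(t - t⁻¹) := by ring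
    rw [e, ht3, hinv3, h1]; ring
  set C : ℝ := (1/3) * (1 - t⁻¹ + t) with hCdef
  have hq : 3*C^3 - 3*C^2 + 2*C - 1 = 0 := by
    have hC' : C = (1 + (t - t⁻¹))/3 := by rw [hCdef]; ring
    rw [hC']; linear_combination (1/9) * hy3
  have hmono : StrictMono (fun y : ℝ => 3*y^3 - 3*y^2 + 2*y - 1) := by
    intro u v huv
    simp only
    nlinarith [sq_nonneg (u + v - 1), sq_nonneg u, sq_nonneg v, sub_pos.2 huv,
      mul_nonneg (sub_pos.2 huv).le (sq_nonneg (u + v - 1)),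
      mul_nonneg (sub_pos.2 huv).le (sq_nonneg u),
      mul_nonneg (sub_pos.2 huv).le (sq_nonneg v)]
  constructor
  · intro habs
    have h1' : 1 - 2*x + 4*x^2 - 6*x^3 + 6*x^4 < 1 := (abs_lt.mp habs).2
    have hqx : 3*x^3 - 3*x^2 + 2*x - 1 < 0 := by
      by_contra hcon
      push_neg at hcon
      nlinarith [mul_nonneg hx.le hcon]
    by_contra hcx
    push_neg at hcx
    have h2 : 3*C^3 - 3*C^2 + 2*C - 1 ≤ 3*x^3 - 3*x^2 + 2*x - 1 := hmono.monotone hcx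
    rw [hq] at h2
    linarith
  · intro hxC
    have h2 : 3*x^3 - 3*x^2 + 2*x - 1 < 3*C^3 - 3*C^2 + 2*C - 1 := hmono hxC
    rw [hq] at h2
    rw [abs_lt]
    constructor
    · nlinarith [sq_nonneg (x^2 - x/2), sq_nonneg (x - 2/5)]
    · nlinarith [mul_pos hx hx]

/-- The jump chain of the second-order stochastic Euler dynamics for `u' = −au`:
`Ŷ_0 = u₀`, `Ŷ_k = (1 − a H_k + a² H_k²/2) Ŷ_{k−1}` (here `H i` stands for `H_{i+1}`). -/
noncomputable def eulerChain2 {Ω : Type*} (a u0 : ℝ) (H : ℕ → Ω → ℝ) : ℕ → Ω → ℝ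
  | 0, _ => u0
  | (k + 1), ω => (1 - a * H k ω + a ^ 2 * (H k ω) ^ 2 / 2) * eulerChain2 a u0 H k ω

/-- `𝔼[Ŷ_k²] = α^k u₀²` with `α = 1 − 2ah + 4a²h² − 6a³h³ + 6a⁴h⁴`; moreover `|α| < 1` iff
`ah < (1/3)(1 − (2/(5+√29))^{1/3} + ((5+√29)/2)^{1/3})`, and for `u₀ ≠ 0`, `𝔼[Ŷ_k²] → 0`
exactly under this stepsize restriction. -/
theorem stmt19 {Ω : Type*} [MeasurableSpace Ω] (P : Measure Ω) [IsProbabilityMeasure P]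
    (a h u0 : ℝ) (ha : 0 < a) (hh : 0 < h)
    (H : ℕ → Ω → ℝ) (hHmeas : ∀ k, Measurable (H k))
    (hHindep : iIndepFun H P)
    (hHdist : ∀ k, Measure.map (H k) P = expMeasure h⁻¹) :
    (∀ k : ℕ, ∫ ω, (eulerChain2 a u0 H k ω) ^ 2 ∂P
        = (1 - 2 * a * h + 4 * a ^ 2 * h ^ 2 - 6 * a ^ 3 * h ^ 3 + 6 * a ^ 4 * h ^ 4) ^ k
            * u0 ^ 2) ∧
      (|1 - 2 * a * h + 4 * a ^ 2 * h ^ 2 - 6 * a ^ 3 * h ^ 3 + 6 * a ^ 4 * h ^ 4| < 1 ↔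
        a * h < (1 / 3) * (1 - (2 / (5 + Real.sqrt 29)) ^ ((1 : ℝ) / 3)
          + ((5 + Real.sqrt 29) / 2) ^ ((1 : ℝ) / 3))) ∧
      (u0 ≠ 0 →
        (Filter.Tendsto (fun k : ℕ => ∫ ω, (eulerChain2 a u0 H k ω) ^ 2 ∂P)
            Filter.atTop (nhds 0) ↔
          a * h < (1 / 3) * (1 - (2 / (5 + Real.sqrt 29)) ^ ((1 : ℝ) / 3)
            + ((5 + Real.sqrt 29) / 2) ^ ((1 : ℝ) / 3)))) := by
  have hr : (0:ℝ) < h⁻¹ := inv_pos.mpr hh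
  set α : ℝ := 1 - 2 * a * h + 4 * a ^ 2 * h ^ 2 - 6 * a ^ 3 * h ^ 3 + 6 * a ^ 4 * h ^ 4
    with hα
  set φ : ℝ → ℝ := fun x => (1 - a * x + a ^ 2 * x ^ 2 / 2) ^ 2 with hφ
  have hφm : Measurable φ := by fun_prop
  set c : ℕ → ℝ := fun i => [(1:ℝ), -(2*a), 2*a^2, -(a^3), a^4/4].getD i 0 with hc
  have hφeq : φ = fun x => ∑ i ∈ Finset.range 5, c i * x ^ i := by
    funext x
    simp [hφ, hc, Finset.sum_range_succ]
    ring
  have hEint : Integrable φ (expMeasure h⁻¹) := by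
    rw [hφeq]; exact exp_poly_integrable hr c
  have hEval : ∫ x, φ x ∂(expMeasure h⁻¹) = α := by
    rw [hφeq, exp_poly_integral hr c, hα]
    simp [hc, Finset.sum_range_succ, Nat.factorial]
    field_simp
    ring
  have hGmeas : ∀ k, Measurable (φ ∘ H k) := fun k => hφm.comp (hHmeas k)
  have hGint : ∀ k, Integrable (φ ∘ H k) P := by
    intro k
    refine (integrable_map_measure hφm.aestronglyMeasurable (hHmeas k).aemeasurable).mp ?_
    rw [hHdist k]; exact hEint
  have hEk : ∀ k, ∫ ω, φ (H k ω) ∂P = α := by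
    intro k
    rw [← integral_map (hHmeas k).aemeasurable hφm.aestronglyMeasurable, hHdist k, hEval]
  have hGindep : iIndepFun (fun i => φ ∘ H i) P :=
    hHindep.comp (fun _ => φ) (fun _ => hφm)
  have hprod : ∀ k, Integrable (fun ω => ∏ j ∈ Finset.range k, φ (H j ω)) P ∧
      ∫ ω, ∏ j ∈ Finset.range k, φ (H j ω) ∂P = α ^ k := by
    intro k
    induction k with
    | zero => simp
    | succ n ih =>
      have hIndep : IndepFun (∏ j ∈ Finset.range n, (φ ∘ H j)) (φ ∘ H n) P :=
        hGindep.indepFun_prod_range_succ hGmeas n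
      have hfeq : (∏ j ∈ Finset.range n, (φ ∘ H j)) = fun ω => ∏ j ∈ Finset.range n, φ (H j ω) := by
        funext ω; simp
      rw [hfeq] at hIndep
      have hmul : Integrable (fun ω => (∏ j ∈ Finset.range n, φ (H j ω)) * φ (H n ω)) P :=
        hIndep.integrable_mul ih.1 (hGint n)
      constructor
      · simp_rw [Finset.prod_range_succ]
        exact hmul
      · simp_rw [Finset.prod_range_succ]
        have hmain := hIndep.integral_mul_eq_mul_integral ih.1.aestronglyMeasurable (hGint n).aestronglyMeasurable
        simp only [Pi.mul_apply, Function.comp_apply] at hmain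
        rw [hmain, ih.2, hEk n, pow_succ]
  have part1 : ∀ k, ∫ ω, (eulerChain2 a u0 H k ω) ^ 2 ∂P = α ^ k * u0 ^ 2 := by
    intro k
    have hptw : ∀ ω, (eulerChain2 a u0 H k ω) ^ 2
        = (∏ j ∈ Finset.range k, φ (H j ω)) * u0 ^ 2 := by
      intro ω
      induction k with
      | zero => simp [eulerChain2]
      | succ n ihn =>
        rw [show eulerChain2 a u0 H (n+1) ω
            = (1 - a * H n ω + a ^ 2 * (H n ω) ^ 2 / 2) * eulerChain2 a u0 H n ω from rfl,
          mul_pow, ihn, Finset.prod_range_succ, hφ]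
        ring
    simp_rw [hptw]
    rw [integral_mul_const, (hprod k).2]
  have hx : 0 < a * h := mul_pos ha hh
  have habs : |α| < 1 ↔
      a * h < (1 / 3) * (1 - (2 / (5 + Real.sqrt 29)) ^ ((1 : ℝ) / 3)
        + ((5 + Real.sqrt 29) / 2) ^ ((1 : ℝ) / 3)) := by
    rw [hα, show 1 - 2 * a * h + 4 * a ^ 2 * h ^ 2 - 6 * a ^ 3 * h ^ 3 + 6 * a ^ 4 * h ^ 4
      = 1 - 2*(a*h) + 4*(a*h)^2 - 6*(a*h)^3 + 6*(a*h)^4 by ring]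
    exact quartic_abs_lt_one_iff hx
  refine ⟨part1, habs, fun hu0 => ?_⟩
  have hu2 : (u0:ℝ) ^ 2 ≠ 0 := pow_ne_zero 2 hu0
  rw [← habs]
  constructor
  · intro htend
    rw [show (fun k : ℕ => ∫ ω, (eulerChain2 a u0 H k ω) ^ 2 ∂P)
        = fun k => α ^ k * u0 ^ 2 from funext part1] at htend
    have h2 := htend.mul_const ((u0 ^ 2)⁻¹)
    rw [zero_mul] at h2
    have h3 : Filter.Tendsto (fun k : ℕ => α ^ k) Filter.atTop (nhds 0) := by
      refine h2.congr (fun k => ?_)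
      field_simp
    exact tendsto_pow_atTop_nhds_zero_iff.mp h3
  · intro hlt
    rw [show (fun k : ℕ => ∫ ω, (eulerChain2 a u0 H k ω) ^ 2 ∂P)
        = fun k => α ^ k * u0 ^ 2 from funext part1]
    have := (tendsto_pow_atTop_nhds_zero_iff.mpr hlt).mul_const (u0 ^ 2)
    rwa [zero_mul] at this
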